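/- Let D be a weakly Krull GCD-domain and let G be a torsion-free abelian group satisfying the ACC on cyclic subgroups. Then D is G-UMT. -/

import Mathlib

/-! ### Basic notions for monoids, monoid algebras and domains -/

/-- A monoid `S` (written additively) is torsion-free if `n • x = n • y` implies `x = y`
for all integers `n ≥ 1`. -/
def AddTorsionFree (S : Type*) [AddCommMonoid S] : Prop :=
  ∀ n : ℕ, n ≠ 0 → ∀ x y : S, n • x = n • y → x = y

/-- An ideal of an additive monoid `S` is a nonempty subset `P` with `P + S ⊆ P`. -/
def IsMonoidIdeal {S : Type*} [AddCommMonoid S] (P : Set S) : Prop :=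
  P.Nonempty ∧ ∀ p ∈ P, ∀ s : S, p + s ∈ P

/-- An ideal `P` of an additive monoid `S` is prime if `P ≠ S` and
`s + t ∈ P` implies `s ∈ P` or `t ∈ P`. -/
def IsMonoidPrimeIdeal {S : Type*} [AddCommMonoid S] (P : Set S) : Prop :=
  IsMonoidIdeal P ∧ P ≠ Set.univ ∧ ∀ s t : S, s + t ∈ P → s ∈ P ∨ t ∈ P

/-- `P ∈ 𝔛(S)`: `P` is a minimal nonempty prime ideal of the monoid `S`. -/
def IsMinMonoidPrime {S : Type*} [AddCommMonoid S] (P : Set S) : Prop :=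
  IsMonoidPrimeIdeal P ∧ ∀ Q : Set S, IsMonoidPrimeIdeal Q → Q ⊆ P → Q = P

/-- `P ∈ 𝔛(R)`: `P` is a height-one prime ideal of `R`, i.e. a nonzero prime ideal
that is minimal among the nonzero prime ideals. -/
def IsHeightOnePrime {R : Type*} [CommRing R] (P : Ideal R) : Prop :=
  P.IsPrime ∧ P ≠ ⊥ ∧ ∀ Q : Ideal R, Q.IsPrime → Q < P → Q = ⊥

/-- `D[P]` for a subset `P ⊆ S`: the set of elements of the monoid algebra `D[S]`
all of whose exponents lie in `P`. -/
def expIn (D : Type*) {S : Type*} [CommRing D] [AddCommMonoid S] (P : Set S) :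
    Set (AddMonoidAlgebra D S) :=
  {f | ∀ s ∈ f.coeff.support, s ∈ P}

/-- `I[S]` for an ideal `I` of `D`: the set of elements of the monoid algebra `D[S]`
all of whose coefficients lie in `I`. -/
def coeffIn {D : Type*} (S : Type*) [CommRing D] [AddCommMonoid S] (I : Ideal D) :
    Set (AddMonoidAlgebra D S) :=
  {f | ∀ s : S, f.coeff s ∈ I}

/-- `φ : S →+ G` realizes `G` as the quotient (Grothendieck) group of `S`:
`φ` is injective and every element of `G` is a difference of elements of `φ(S)`. -/
def IsQuotientGroup {S G : Type*} [AddCommMonoid S] [AddCommGroup G] (φ : S →+ G) : Prop :=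
  Function.Injective φ ∧ ∀ g : G, ∃ s t : S, g = φ s - φ t

/-- A subgroup is cyclic if it is generated by a single element. -/
def IsCyclicAddSubgroup {G : Type*} [AddCommGroup G] (H : AddSubgroup G) : Prop :=
  ∃ g : G, H = AddSubgroup.closure {g}

/-- `G` satisfies the ACC on cyclic subgroups: every ascending chain of cyclic
subgroups of `G` stabilizes. -/
def ACCOnCyclicSubgroups (G : Type*) [AddCommGroup G] : Prop :=
  ∀ c : ℕ →o AddSubgroup G, (∀ n, IsCyclicAddSubgroup (c n)) →
    ∃ N, ∀ n, N ≤ n → c n = c N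

/-- `D` is `S`-UMT: `P[S] ∈ 𝔛(D[S])` for every `P ∈ 𝔛(D)`. -/
def IsDomainUMT (D S : Type*) [CommRing D] [AddCommMonoid S] : Prop :=
  ∀ P : Ideal D, IsHeightOnePrime P →
    ∃ Q : Ideal (AddMonoidAlgebra D S), (Q : Set (AddMonoidAlgebra D S)) = coeffIn S P ∧
      IsHeightOnePrime Q

/-- `S` is `D`-UMT: `D[P] ∈ 𝔛(D[S])` for every `P ∈ 𝔛(S)`. -/
def IsMonoidUMT (D S : Type*) [CommRing D] [AddCommMonoid S] : Prop :=
  ∀ P : Set S, IsMinMonoidPrime P →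
    ∃ Q : Ideal (AddMonoidAlgebra D S), (Q : Set (AddMonoidAlgebra D S)) = expIn D P ∧
      IsHeightOnePrime Q

/-- The localization `R_P` of `R` at a prime ideal `P`, as a subset of the fraction
field of `R`. -/
def locAt {R : Type*} [CommRing R] (P : Ideal R) : Set (FractionRing R) :=
  {x | ∃ a b : R, b ∉ P ∧
    x * algebraMap R (FractionRing R) b = algebraMap R (FractionRing R) a}

/-- A domain `R` is weakly Krull if `R = ⋂_{P ∈ 𝔛(R)} R_P` inside its quotient field and
every nonzero nonunit of `R` lies in only finitely many height-one primes. -/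
def IsWeaklyKrullDomain (R : Type*) [CommRing R] : Prop :=
  (∀ x : FractionRing R, (∀ P : Ideal R, IsHeightOnePrime P → x ∈ locAt P) →
      ∃ r : R, x = algebraMap R (FractionRing R) r) ∧
  ∀ r : R, r ≠ 0 → ¬IsUnit r → {P : Ideal R | IsHeightOnePrime P ∧ r ∈ P}.Finite

/-- The localization `S_P = {s - t : s ∈ S, t ∈ S ∖ P}` of the monoid `S` at `P`,
inside the quotient group of `S` realized by `φ`. -/
def monLocAt {S G : Type*} [AddCommMonoid S] [AddCommGroup G] (φ : S →+ G) (P : Set S) :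
    Set G :=
  {g | ∃ s t : S, t ∉ P ∧ g = φ s - φ t}

/-- A monoid `S` is weakly Krull if `S = ⋂_{P ∈ 𝔛(S)} S_P` inside its quotient group and
every nonunit of `S` lies in only finitely many minimal nonempty primes. -/
def IsWeaklyKrullMonoid {S G : Type*} [AddCommMonoid S] [AddCommGroup G] (φ : S →+ G) :
    Prop :=
  (∀ g : G, (∀ P : Set S, IsMinMonoidPrime P → g ∈ monLocAt φ P) → ∃ s : S, g = φ s) ∧
  ∀ s : S, ¬IsAddUnit s → {P : Set S | IsMinMonoidPrime P ∧ s ∈ P}.Finite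

/-- A Krull domain: a weakly Krull domain each of whose localizations at height-one
primes is a discrete rank-one valuation ring, i.e. the ring of nonnegative elements of a
`ℤ`-valued valuation on the quotient field. -/
def IsKrullDomain (R : Type*) [CommRing R] : Prop :=
  IsWeaklyKrullDomain R ∧
  ∀ P : Ideal R, IsHeightOnePrime P →
    ∃ v : (FractionRing R)ˣ →* Multiplicative ℤ,
      ∀ x : (FractionRing R)ˣ, ((x : FractionRing R) ∈ locAt P ↔ 0 ≤ Multiplicative.toAdd (v x))

/-- A Krull monoid: a weakly Krull monoid such that for each `P ∈ 𝔛(S)` there is a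
group homomorphism `v : q(S) → ℤ` with `S_P = {x : v x ≥ 0}`. -/
def IsKrullMonoid {S G : Type*} [AddCommMonoid S] [AddCommGroup G] (φ : S →+ G) : Prop :=
  IsWeaklyKrullMonoid φ ∧
  ∀ P : Set S, IsMinMonoidPrime P →
    ∃ v : G →+ ℤ, ∀ g : G, g ∈ monLocAt φ P ↔ 0 ≤ v g

/-- A generalized Krull domain: a weakly Krull domain each of whose localizations `R_P`
at height-one primes is a valuation domain: every `x` in the quotient field satisfies
`x ∈ R_P` or `x⁻¹ ∈ R_P`. -/
def IsGeneralizedKrullDomain (R : Type*) [CommRing R] : Prop :=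
  IsWeaklyKrullDomain R ∧
  ∀ P : Ideal R, IsHeightOnePrime P →
    ∀ x : FractionRing R, x ∈ locAt P ∨ ∃ y ∈ locAt P, x * y = 1

/-- A generalized Krull monoid: a weakly Krull monoid each of whose localizations `S_P`
at minimal primes is a valuation monoid of `q(S)`: `g ∈ S_P` or `-g ∈ S_P` for all `g`. -/
def IsGeneralizedKrullMonoid {S G : Type*} [AddCommMonoid S] [AddCommGroup G]
    (φ : S →+ G) : Prop :=
  IsWeaklyKrullMonoid φ ∧
  ∀ P : Set S, IsMinMonoidPrime P → ∀ g : G, g ∈ monLocAt φ P ∨ -g ∈ monLocAt φ P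

/-! ### The `t`-operation and UMT-domains -/

/-- For a subset `A` of the quotient field of `R`, the set
`A⁻¹ = {x : x • A ⊆ R}` inside the quotient field. -/
def setInv {R : Type*} [CommRing R] (A : Set (FractionRing R)) : Set (FractionRing R) :=
  {x | ∀ a ∈ A, ∃ r : R, x * a = algebraMap R (FractionRing R) r}

/-- `I_v = (I⁻¹)⁻¹` for an ideal `I` of `R`, as a subset of the quotient field. -/
def idealV {R : Type*} [CommRing R] (I : Ideal R) : Set (FractionRing R) :=
  setInv (setInv (algebraMap R (FractionRing R) '' (I : Set R)))

/-- `I` is a `t`-ideal: `I_t = I`, i.e. `J_v ⊆ I` for every nonzero finitely generated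
ideal `J ⊆ I` (the inclusion `I ⊆ I_t` always holds). -/
def IsTIdeal {R : Type*} [CommRing R] (I : Ideal R) : Prop :=
  ∀ J : Ideal R, J ≤ I → J.FG → J ≠ ⊥ →
    idealV J ⊆ algebraMap R (FractionRing R) '' (I : Set R)

/-- A maximal `t`-ideal: an ideal maximal among proper `t`-ideals. -/
def IsMaximalTIdeal {R : Type*} [CommRing R] (I : Ideal R) : Prop :=
  I ≠ ⊤ ∧ IsTIdeal I ∧ ∀ J : Ideal R, J ≠ ⊤ → IsTIdeal J → I ≤ J → I = J

/-- A UMT-domain: every (nonzero) prime ideal of `D[X]` contracting to `(0)` in `D`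
(an "upper to zero") is a maximal `t`-ideal of `D[X]`. -/
def IsUMTDomain (D : Type*) [CommRing D] : Prop :=
  ∀ Q : Ideal (Polynomial D), Q.IsPrime → Q ≠ ⊥ →
    Q.comap (Polynomial.C : D →+* Polynomial D) = ⊥ → IsMaximalTIdeal Q

/-! ### GCD, primary elements, weak factoriality -/

/-- A GCD-domain: any two nonzero elements have a greatest common divisor. -/
def IsGCDDomain (R : Type*) [CommRing R] : Prop :=
  ∀ a b : R, a ≠ 0 → b ≠ 0 →
    ∃ d : R, d ∣ a ∧ d ∣ b ∧ ∀ e : R, e ∣ a → e ∣ b → e ∣ d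

/-- Divisibility in an additive monoid: `a ∣ b ↔ b ∈ a + S`. -/
def AddDvd {S : Type*} [AddCommMonoid S] (a b : S) : Prop := ∃ c : S, b = a + c

/-- A GCD-monoid: any two elements have a greatest common divisor with respect to
the divisibility preorder. -/
def IsGCDAddMonoid (S : Type*) [AddCommMonoid S] : Prop :=
  ∀ a b : S, ∃ d : S, AddDvd d a ∧ AddDvd d b ∧ ∀ e : S, AddDvd e a → AddDvd e b → AddDvd e d

/-- A primary element of a ring: the principal ideal it generates is primary. -/
def IsPrimaryElem {R : Type*} [CommRing R] (a : R) : Prop :=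
  (Ideal.span {a} : Ideal R).IsPrimary

/-- A weakly factorial domain: every nonzero nonunit is a finite product of
primary elements. -/
def IsWeaklyFactorialDomain (R : Type*) [CommRing R] : Prop :=
  ∀ a : R, a ≠ 0 → ¬IsUnit a →
    ∃ l : List R, (∀ b ∈ l, IsPrimaryElem b) ∧ a = l.prod

/-- A primary ideal of an additive monoid: an ideal `Q ≠ S` such that `s + t ∈ Q`
with `s ∉ Q` implies `n • t ∈ Q` for some `n ≥ 1`. -/
def IsMonoidPrimaryIdeal {S : Type*} [AddCommMonoid S] (Q : Set S) : Prop :=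
  IsMonoidIdeal Q ∧ Q ≠ Set.univ ∧
    ∀ s t : S, s + t ∈ Q → s ∉ Q → ∃ n : ℕ, 1 ≤ n ∧ n • t ∈ Q

/-- A primary element of an additive monoid: the ideal `a + S` is primary. -/
def IsMonoidPrimaryElem {S : Type*} [AddCommMonoid S] (a : S) : Prop :=
  IsMonoidPrimaryIdeal {x : S | ∃ s : S, x = a + s}

/-- A weakly factorial monoid: every nonunit is a finite sum of primary elements. -/
def IsWeaklyFactorialMonoid (S : Type*) [AddCommMonoid S] : Prop :=
  ∀ a : S, ¬IsAddUnit a →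
    ∃ l : List S, (∀ b ∈ l, IsMonoidPrimaryElem b) ∧ a = l.sum

/-! ### The canonical inclusions `D[S] → K[S]` and `D[S] → D[G]` -/

/-- The canonical inclusion `D[S] → K[S]`, where `K` is the fraction field of `D`,
applying `D → K` to all coefficients. -/
noncomputable def coeffEmbed (D S : Type*) [CommRing D] [IsDomain D] [AddCommMonoid S] :
    AddMonoidAlgebra D S →+* AddMonoidAlgebra (FractionRing D) S :=
  AddMonoidAlgebra.liftNCRingHom
    ((AddMonoidAlgebra.singleZeroRingHom).comp (algebraMap D (FractionRing D)))
    (AddMonoidAlgebra.of (FractionRing D) S) (fun {_ _} => Commute.all _ _)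

/-- The canonical inclusion `D[S] → D[G]`, where `G` is the quotient group of `S`
realized by `φ`, applying `φ` to all exponents. -/
noncomputable def expEmbed (D : Type*) {S G : Type*} [CommRing D] [AddCommMonoid S]
    [AddCommGroup G] (φ : S →+ G) : AddMonoidAlgebra D S →+* AddMonoidAlgebra D G :=
  AddMonoidAlgebra.mapDomainRingHom D φ

/-! ### Auxiliary lemmas -/

/-- A GCD-domain carries a (noncomputable) `GCDMonoid` structure. -/
noncomputable def IsGCDDomain.toGCDMonoid {D : Type*} [CommRing D] [IsDomain D]
    (h : IsGCDDomain D) : GCDMonoid D := by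
  letI := Classical.decEq D
  exact gcdMonoidOfGCD
    (fun a b => if ha : a = 0 then b else if hb : b = 0 then a
      else Classical.choose (h a b ha hb))
    (fun a b => by
      by_cases ha : a = 0
      · simp [ha]
      by_cases hb : b = 0
      · simp [ha, hb]
      · simpa [ha, hb] using (Classical.choose_spec (h a b ha hb)).1)
    (fun a b => by
      by_cases ha : a = 0
      · simp [ha]
      by_cases hb : b = 0
      · simp [ha, hb]
      · simpa [ha, hb] using (Classical.choose_spec (h a b ha hb)).2.1)
    (fun {a b c} hac hab => by
      by_cases hc : c = 0
      · simpa [hc] using hab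
      by_cases hb : b = 0
      · simpa [hc, hb] using hac
      · simpa [hc, hb] using (Classical.choose_spec (h c b hc hb)).2.2 a hac hab)

/-- In a GCD domain, the gcd of two elements of a height-one prime `P` (the first
nonzero) again lies in `P`. -/
theorem gcd_mem_of_heightOnePrime {D : Type*} [CommRing D] [IsDomain D] [GCDMonoid D]
    {P : Ideal D} (hP : IsHeightOnePrime P) {a b : D} (ha0 : a ≠ 0)
    (ha : a ∈ P) (hb : b ∈ P) : gcd a b ∈ P := by
  haveI hPp : P.IsPrime := hP.1
  haveI : Nonempty (GCDMonoid D) := ⟨inferInstance⟩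
  by_contra hd
  have hg0 : gcd a b ≠ 0 := fun h => ha0 (by simpa [h] using gcd_dvd_left a b)
  obtain ⟨a', ha'⟩ := gcd_dvd_left a b
  obtain ⟨b', hb'⟩ := gcd_dvd_right a b
  have ha'P : a' ∈ P := (hPp.mem_or_mem (ha' ▸ ha)).resolve_left hd
  have hb'P : b' ∈ P := (hPp.mem_or_mem (hb' ▸ hb)).resolve_left hd
  have ha'0 : a' ≠ 0 := fun h => ha0 (by rw [ha', h, mul_zero])
  have hrel : IsRelPrime a' b' := by
    intro c hc1 hc2
    obtain ⟨u, hu⟩ := hc1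
    obtain ⟨v, hv⟩ := hc2
    have h3 : gcd a b * c ∣ gcd a b := dvd_gcd
      ⟨u, by rw [mul_assoc]; exact hu ▸ ha'⟩ ⟨v, by rw [mul_assoc]; exact hv ▸ hb'⟩
    obtain ⟨k, hk⟩ := h3
    refine IsUnit.of_mul_eq_one k (mul_left_cancel₀ hg0 ?_)
    rw [mul_one, ← mul_assoc]
    exact hk.symm
  letI L := Localization.AtPrime P
  have hinj : Function.Injective (algebraMap D L) :=
    IsLocalization.injective L P.primeCompl_le_nonZeroDivisors
  have hrad : algebraMap D L b' ∈ (Ideal.span {algebraMap D L a'}).radical := by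
    rw [Ideal.radical_eq_sInf]
    refine Submodule.mem_sInf.2 ?_
    rintro J ⟨hJle, hJpr⟩
    haveI := hJpr
    have hle : Ideal.comap (algebraMap D L) J ≤ P := by
      intro r hr
      by_contra hrP
      exact hJpr.ne_top (Ideal.eq_top_of_isUnit_mem J (Ideal.mem_comap.1 hr)
        (IsLocalization.map_units (M := P.primeCompl) L ⟨r, hrP⟩))
    have ha'mem : a' ∈ Ideal.comap (algebraMap D L) J :=
      Ideal.mem_comap.2 (hJle (Ideal.subset_span rfl))
    have hPeq : Ideal.comap (algebraMap D L) J = P := by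
      rcases eq_or_lt_of_le hle with h | h
      · exact h
      · refine absurd (hP.2.2 _ (Ideal.IsPrime.comap _) h) (fun hbot => ?_)
        rw [hbot] at ha'mem
        exact ha'0 (by simpa using ha'mem)
    exact Ideal.mem_comap.1 (hPeq.symm ▸ hb'P)
  obtain ⟨n, hn⟩ := Ideal.mem_radical_iff.1 hrad
  rw [← map_pow, Ideal.mem_span_singleton'] at hn
  obtain ⟨x, hx⟩ := hn
  obtain ⟨⟨c, s⟩, (hcs : IsLocalization.mk' L c s = x)⟩ := IsLocalization.mk'_surjective P.primeCompl x
  have key : b' ^ n * (s : D) = a' * c := hinj (by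
    rw [map_mul, map_mul, ← hx, ← hcs, mul_right_comm, IsLocalization.mk'_spec, mul_comm])
  have hdvd : a' ∣ b' ^ n * (s : D) := ⟨c, key⟩
  obtain ⟨t, ht⟩ := (hrel.pow_right).dvd_of_dvd_mul_left hdvd
  exact s.2 (ht ▸ Ideal.mul_mem_right t P ha'P)

theorem foldr_gcd_dvd {D : Type*} [CommMonoidWithZero D] [GCDMonoid D] :
    ∀ (l : List D), ∀ x ∈ l, l.foldr gcd 0 ∣ x := by
  intro l
  induction l with
  | nil => intro x hx; exact absurd hx List.not_mem_nil
  | cons a t ih =>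
    intro x hx
    rcases List.mem_cons.1 hx with rfl | hx
    · exact gcd_dvd_left _ _
    · exact (gcd_dvd_right a _).trans (ih x hx)

theorem dvd_foldr_gcd {D : Type*} [CommMonoidWithZero D] [GCDMonoid D]
    (e : D) : ∀ (l : List D), (∀ x ∈ l, e ∣ x) → e ∣ l.foldr gcd 0 := by
  intro l
  induction l with
  | nil => intro _; exact dvd_zero e
  | cons a t ih =>
    intro h
    exact dvd_gcd (h a List.mem_cons_self) (ih fun x hx => h x (List.mem_cons_of_mem a hx))

theorem foldr_gcd_mem {D : Type*} [CommRing D] [IsDomain D] [GCDMonoid D]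
    {P : Ideal D} (hP : IsHeightOnePrime P) :
    ∀ l : List D, (∀ x ∈ l, x ∈ P ∧ x ≠ 0) → l.foldr gcd 0 ∈ P := by
  intro l
  induction l with
  | nil => intro _; exact P.zero_mem
  | cons a t ih =>
    intro h
    exact gcd_mem_of_heightOnePrime hP (h a List.mem_cons_self).2
      (h a List.mem_cons_self).1 (ih fun x hx => h x (List.mem_cons_of_mem a hx))

/-- A torsion-free abelian group has unique sums. -/
theorem AddTorsionFree.uniqueSums {G : Type*} [AddCommGroup G]
    (hG : AddTorsionFree G) : UniqueSums G := by
  classical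
  have key : ∀ k : ℤ, k ≠ 0 → ∀ m m' : G, k • m = k • m' → m = m' := by
    intro k hk m m' hkm
    rcases lt_or_gt_of_ne hk with hneg | hpos
    · have h2 : (-k) • m = (-k) • m' := by rw [neg_smul, neg_smul, hkm]
      have h3 : (-k).toNat • m = (-k).toNat • m' := by
        rw [← natCast_zsmul, ← natCast_zsmul, Int.toNat_of_nonneg (by omega)]
        exact h2
      exact hG (-k).toNat (by omega) m m' h3
    · have h3 : k.toNat • m = k.toNat • m' := by
        rw [← natCast_zsmul, ← natCast_zsmul, Int.toNat_of_nonneg (by omega)]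
        exact hkm
      exact hG k.toNat (by omega) m m' h3
  letI : Module ℚ (LocalizedModule (nonZeroDivisors ℤ) G) :=
    Module.compHom _ ((FractionRing.algEquiv ℤ ℚ).symm.toRingEquiv.toRingHom)
  let F : G →+ LocalizedModule (nonZeroDivisors ℤ) G :=
    AddMonoidHom.mk' (fun m => LocalizedModule.mk m 1)
      (fun x y => by rw [LocalizedModule.mk_add_mk]; simp)
  have hinj : Function.Injective F := by
    intro m m' h
    have h' : LocalizedModule.mk m (1 : nonZeroDivisors ℤ)
        = LocalizedModule.mk m' (1 : nonZeroDivisors ℤ) := h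
    rw [LocalizedModule.mk_eq] at h'
    obtain ⟨u, hu⟩ := h'
    simp only [one_smul] at hu
    exact key u (nonZeroDivisors.coe_ne_zero u) m m'
      (by simpa [Submonoid.smul_def] using hu)
  exact UniqueSums.of_injective_addHom F.toAddHom hinj inferInstance

/-- Let `D` be a weakly Krull GCD-domain and `G` a torsion-free abelian
group satisfying the ACC on cyclic subgroups. Then `D` is `G`-UMT. -/
theorem weaklyKrull_gcdDomain_isDomainUMT
    {D G : Type*} [CommRing D] [IsDomain D] [AddCommGroup G]
    (hD1 : IsWeaklyKrullDomain D) (hD2 : IsGCDDomain D)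
    (hG : AddTorsionFree G) (hacc : ACCOnCyclicSubgroups G) :
    IsDomainUMT D G := by
  classical
  letI : GCDMonoid D := hD2.toGCDMonoid
  haveI : UniqueSums G := hG.uniqueSums
  intro P hP
  haveI hPp : P.IsPrime := hP.1
  set π : D →+* D ⧸ P := Ideal.Quotient.mk P with hπdef
  set Φ : AddMonoidAlgebra D G →+* AddMonoidAlgebra (D ⧸ P) G :=
    AddMonoidAlgebra.liftNCRingHom
      ((AddMonoidAlgebra.singleZeroRingHom).comp π)
      (AddMonoidAlgebra.of (D ⧸ P) G) (fun {_ _} => Commute.all _ _) with hΦdef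
  have hsingle : ∀ (a : G) (b : D),
      Φ (AddMonoidAlgebra.single a b) = AddMonoidAlgebra.single a (π b) := by
    intro a b
    show AddMonoidAlgebra.liftNC _ _ (AddMonoidAlgebra.single a b) = _
    rw [AddMonoidAlgebra.liftNC_single]
    show AddMonoidAlgebra.singleZeroRingHom (π b)
        * AddMonoidAlgebra.of (D ⧸ P) G (Multiplicative.ofAdd a) = _
    simp [AddMonoidAlgebra.singleZeroRingHom, AddMonoidAlgebra.of_apply,
      AddMonoidAlgebra.single_mul_single]
  have hΦ : ∀ f : AddMonoidAlgebra D G, ∀ s : G, (Φ f).coeff s = π (f.coeff s) := by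
    intro f
    induction f using AddMonoidAlgebra.induction_linear with
    | zero => intro s; simp
    | add f g hf hg =>
      intro s
      rw [map_add, AddMonoidAlgebra.coeff_add, AddMonoidAlgebra.coeff_add, Finsupp.add_apply, Finsupp.add_apply, map_add, hf s, hg s]
    | single a b =>
      intro s
      rw [hsingle a b, AddMonoidAlgebra.coeff_single, AddMonoidAlgebra.coeff_single, Finsupp.single_apply, Finsupp.single_apply]
      split
      · rfl
      · rw [map_zero]
  have hker : ∀ f : AddMonoidAlgebra D G,
      f ∈ RingHom.ker Φ ↔ ∀ s : G, f.coeff s ∈ P := by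
    intro f
    rw [RingHom.mem_ker]
    constructor
    · intro h s
      rw [← Ideal.Quotient.eq_zero_iff_mem]
      show π (f.coeff s) = 0
      rw [← hΦ f s, h]
      rfl
    · intro h
      ext s
      rw [hΦ f s]
      show π (f.coeff s) = 0
      rw [Ideal.Quotient.eq_zero_iff_mem]
      exact h s
  haveI : IsDomain (AddMonoidAlgebra (D ⧸ P) G) :=
    NoZeroDivisors.to_isDomain _
  refine ⟨RingHom.ker Φ, ?_, RingHom.ker_isPrime Φ, ?_, ?_⟩
  · ext f
    simpa [coeffIn, Set.mem_setOf_eq] using hker f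
  · obtain ⟨p, hpP, hp0⟩ := Submodule.exists_mem_ne_zero_of_ne_bot hP.2.1
    intro hbot
    have hmem : AddMonoidAlgebra.single (0 : G) p ∈ RingHom.ker Φ := by
      rw [hker]
      intro s
      rw [AddMonoidAlgebra.coeff_single, Finsupp.single_apply]
      split
      · exact hpP
      · exact P.zero_mem
    rw [hbot] at hmem
    have h0 : AddMonoidAlgebra.single (0 : G) p = 0 :=
      (Submodule.mem_bot (AddMonoidAlgebra D G)).1 hmem
    exact hp0 (AddMonoidAlgebra.single_eq_zero.1 h0)
  · intro Q'' hQ'' hlt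
    by_contra hne
    obtain ⟨f, hfQ, hf0⟩ := Submodule.exists_mem_ne_zero_of_ne_bot hne
    have hcoeff : ∀ g ∈ Q'', ∀ s : G, g.coeff s ∈ P := fun g hg => (hker g).1 (hlt.le hg)
    set l : List D := f.coeff.support.toList.map f.coeff with hldef
    have hlP : ∀ x ∈ l, x ∈ P ∧ x ≠ 0 := by
      intro x hx
      obtain ⟨s, hs, rfl⟩ := List.mem_map.1 hx
      exact ⟨hcoeff f hfQ s, Finsupp.mem_support_iff.1 (Finset.mem_toList.1 hs)⟩
    set d : D := l.foldr gcd 0 with hddef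
    have hdP : d ∈ P := foldr_gcd_mem hP l hlP
    have hddvd : ∀ s : G, d ∣ f.coeff s := by
      intro s
      by_cases hs : s ∈ f.coeff.support
      · exact foldr_gcd_dvd l _ (List.mem_map.2 ⟨s, Finset.mem_toList.2 hs, rfl⟩)
      · rw [Finsupp.notMem_support_iff.1 hs]
        exact dvd_zero d
    have hd0 : d ≠ 0 := by
      obtain ⟨s, hs⟩ := Finsupp.support_nonempty_iff.2 (fun h => hf0 (AddMonoidAlgebra.coeff_injective (h.trans AddMonoidAlgebra.coeff_zero.symm)))
      intro h
      refine Finsupp.mem_support_iff.1 hs ?_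
      have h2 := hddvd s
      rw [h] at h2
      exact zero_dvd_iff.1 h2
    choose cfun hcfun using hddvd
    have hczero : ∀ s, s ∉ f.coeff.support → cfun s = 0 := by
      intro s hs
      have h2 : d * cfun s = 0 := by rw [← hcfun s, Finsupp.notMem_support_iff.1 hs]
      exact (mul_eq_zero.1 h2).resolve_left hd0
    set f₁ : AddMonoidAlgebra D G :=
      AddMonoidAlgebra.ofCoeff <| Finsupp.onFinset f.coeff.support cfun (fun s hs => by
        by_contra h
        exact hs (hczero s h)) with hf₁def
    have hf₁apply : ∀ s, f₁.coeff s = cfun s := fun s => rfl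
    have hfact : AddMonoidAlgebra.single (0 : G) d * f₁ = f := by
      ext s
      rw [AddMonoidAlgebra.coeff_single_zero_mul, hf₁apply s]
      exact (hcfun s).symm
    rcases hQ''.mem_or_mem
        (show AddMonoidAlgebra.single (0 : G) d * f₁ ∈ Q'' from hfact.symm ▸ hfQ) with hcase | hcase
    · -- `single 0 d ∈ Q''`; contract to `D` and conclude `ker Φ ≤ Q''`.
      have happ : ∀ r : D,
          (AddMonoidAlgebra.singleZeroRingHom r : AddMonoidAlgebra D G)
            = AddMonoidAlgebra.single 0 r := fun r => rfl
      have hP0le : Ideal.comap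
          (AddMonoidAlgebra.singleZeroRingHom : D →+* AddMonoidAlgebra D G) Q'' ≤ P := by
        intro r hr
        have h2 := hcoeff _ (Ideal.mem_comap.1 hr) 0
        rw [happ r, AddMonoidAlgebra.coeff_single, Finsupp.single_eq_same] at h2
        exact h2
      have hdmem : d ∈ Ideal.comap
          (AddMonoidAlgebra.singleZeroRingHom : D →+* AddMonoidAlgebra D G) Q'' := by
        rw [Ideal.mem_comap, happ d]
        exact hcase
      have hPeq : Ideal.comap
          (AddMonoidAlgebra.singleZeroRingHom : D →+* AddMonoidAlgebra D G) Q'' = P := by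
        rcases eq_or_lt_of_le hP0le with h | h
        · exact h
        · refine absurd (hP.2.2 _ (Ideal.IsPrime.comap _) h) (fun hbot => ?_)
          rw [hbot] at hdmem
          exact hd0 (by simpa using hdmem)
      have hQle : RingHom.ker Φ ≤ Q'' := by
        intro g hg
        have hgP : ∀ s, g.coeff s ∈ P := (hker g).1 hg
        rw [← AddMonoidAlgebra.sum_coeff_single g, Finsupp.sum]
        refine Ideal.sum_mem _ (fun a ha => ?_)
        have h1 : (AddMonoidAlgebra.single a (g.coeff a) : AddMonoidAlgebra D G)
            = AddMonoidAlgebra.single (0 : G) (g.coeff a) * AddMonoidAlgebra.single a 1 := by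
          rw [AddMonoidAlgebra.single_mul_single, zero_add, mul_one]
        rw [h1]
        refine Ideal.mul_mem_right _ _ ?_
        have h2 : g.coeff a ∈ Ideal.comap
            (AddMonoidAlgebra.singleZeroRingHom : D →+* AddMonoidAlgebra D G) Q'' :=
          hPeq.symm ▸ hgP a
        rw [Ideal.mem_comap, happ (g.coeff a)] at h2
        exact h2
      exact absurd (le_antisymm hlt.le hQle) hlt.ne
    · -- `f₁ ∈ Q''`: its coefficients lie in `P` but have unit gcd, contradiction.
      have hf₁P : ∀ s, f₁.coeff s ∈ P := (hker f₁).1 (hlt.le hcase)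
      set l₁ : List D := f₁.coeff.support.toList.map f₁.coeff with hl₁def
      have hl₁P : ∀ x ∈ l₁, x ∈ P ∧ x ≠ 0 := by
        intro x hx
        obtain ⟨s, hs, rfl⟩ := List.mem_map.1 hx
        exact ⟨hf₁P s, Finsupp.mem_support_iff.1 (Finset.mem_toList.1 hs)⟩
      have hd'P : l₁.foldr gcd 0 ∈ P := foldr_gcd_mem hP l₁ hl₁P
      set d' : D := l₁.foldr gcd 0 with hd'def
      have hdd' : d * d' ∣ d := by
        refine dvd_foldr_gcd (d * d') l (fun x hx => ?_)
        obtain ⟨s, hs, rfl⟩ := List.mem_map.1 hx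
        have hs' : s ∈ f.coeff.support := Finset.mem_toList.1 hs
        have hcs : cfun s ≠ 0 := fun h =>
          Finsupp.mem_support_iff.1 hs' (by rw [hcfun s, h, mul_zero])
        have hs₁ : s ∈ f₁.coeff.support := Finsupp.mem_support_iff.2 (by
          rw [hf₁apply s]; exact hcs)
        have hd'c : d' ∣ cfun s := by
          have h3 := foldr_gcd_dvd l₁ (f₁.coeff s)
            (List.mem_map.2 ⟨s, Finset.mem_toList.2 hs₁, rfl⟩)
          rwa [hf₁apply s] at h3
        rw [hcfun s]
        exact mul_dvd_mul (dvd_refl d) hd'c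
      obtain ⟨k, hk⟩ := hdd'
      have hunit : d' * k = 1 := by
        refine mul_left_cancel₀ hd0 ?_
        rw [mul_one, ← mul_assoc]
        exact hk.symm
      exact hPp.ne_top (Ideal.eq_top_of_isUnit_mem _ hd'P (IsUnit.of_mul_eq_one k hunit))
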